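/- (Tweedie's formula) Let X have density p on R^M, U ~ N(0, I) independent of X, η > 0, and Y = X + ηU with marginal density p̃. Then E[X | Y = y] = y + η² ∇ log p̃(y) for almost every y. -/

import Mathlib

open MeasureTheory RealInnerProductSpace

set_option maxHeartbeats 1000000
set_option synthInstance.maxHeartbeats 1000000

/-- The isotropic Gaussian kernel with standard deviation `η` on `ℝ^M`. -/
noncomputable def gaussKer (M : ℕ) (η : ℝ) (v : EuclideanSpace ℝ (Fin M)) : ℝ :=
  (2 * Real.pi * η ^ 2) ^ (-(M : ℝ) / 2) * Real.exp (-‖v‖ ^ 2 / (2 * η ^ 2))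

section Aux
variable {M : ℕ} {η : ℝ}

lemma gaussKer_pos (hη : 0 < η) (v : EuclideanSpace ℝ (Fin M)) : 0 < gaussKer M η v :=
  mul_pos (Real.rpow_pos_of_pos (by positivity) _) (Real.exp_pos _)

lemma gaussKer_le (hη : 0 < η) (v : EuclideanSpace ℝ (Fin M)) :
    gaussKer M η v ≤ (2 * Real.pi * η ^ 2) ^ (-(M : ℝ) / 2) := by
  have h1 : Real.exp (-‖v‖ ^ 2 / (2 * η ^ 2)) ≤ 1 := by
    rw [Real.exp_le_one_iff]
    have : (0:ℝ) ≤ ‖v‖ ^ 2 / (2 * η ^ 2) := by positivity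
    rw [neg_div]; linarith
  calc gaussKer M η v ≤ (2 * Real.pi * η ^ 2) ^ (-(M : ℝ) / 2) * 1 := by
        unfold gaussKer
        gcongr
    _ = _ := mul_one _

lemma norm_mul_gaussKer_le (hη : 0 < η) (v : EuclideanSpace ℝ (Fin M)) :
    ‖v‖ * gaussKer M η v ≤ (2 * Real.pi * η ^ 2) ^ (-(M : ℝ) / 2) * (2 * η) := by
  have hA : (0:ℝ) < (2 * Real.pi * η ^ 2) ^ (-(M : ℝ) / 2) :=
    Real.rpow_pos_of_pos (by positivity) _
  have key : ‖v‖ * Real.exp (-‖v‖ ^ 2 / (2 * η ^ 2)) ≤ 2 * η := by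
    set t := ‖v‖ with ht
    have ht0 : 0 ≤ t := norm_nonneg v
    rcases le_or_gt t (2 * η) with h | h
    · calc t * Real.exp (-t ^ 2 / (2 * η ^ 2)) ≤ t * 1 := by
            gcongr
            rw [Real.exp_le_one_iff]
            have : (0:ℝ) ≤ t ^ 2 / (2 * η ^ 2) := by positivity
            rw [neg_div]; linarith
        _ ≤ 2 * η := by linarith
    · have ht0' : 0 < t := lt_trans (by positivity) h
      have hs : (0:ℝ) < t ^ 2 / (2 * η ^ 2) := by positivity
      have hexp : Real.exp (-(t ^ 2 / (2 * η ^ 2))) ≤ (t ^ 2 / (2 * η ^ 2))⁻¹ := by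
        rw [Real.exp_neg]
        apply inv_anti₀ hs
        calc t ^ 2 / (2 * η ^ 2) ≤ Real.exp (t ^ 2 / (2 * η ^ 2)) - 1 + 1 := by
              have := Real.add_one_le_exp (t ^ 2 / (2 * η ^ 2)); linarith
          _ = Real.exp (t ^ 2 / (2 * η ^ 2)) := by ring
      calc t * Real.exp (-t ^ 2 / (2 * η ^ 2)) = t * Real.exp (-(t ^ 2 / (2 * η ^ 2))) := by
            rw [neg_div]
        _ ≤ t * (t ^ 2 / (2 * η ^ 2))⁻¹ := by gcongr
        _ = 2 * η ^ 2 / t := by field_simp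
        _ ≤ 2 * η ^ 2 / (2 * η) := by gcongr
        _ ≤ 2 * η := by rw [div_le_iff₀ (by positivity)]; nlinarith
  calc ‖v‖ * gaussKer M η v
      = (2 * Real.pi * η ^ 2) ^ (-(M : ℝ) / 2) * (‖v‖ * Real.exp (-‖v‖ ^ 2 / (2 * η ^ 2))) := by
        unfold gaussKer; ring
    _ ≤ _ := by gcongr

lemma gaussKer_continuous (hη : 0 < η) : Continuous (gaussKer M η) := by
  unfold gaussKer
  exact continuous_const.mul ((continuous_norm.pow 2).neg.div_const _).rexp

lemma gaussKer_hasFDerivAt (hη : 0 < η) (v : EuclideanSpace ℝ (Fin M)) :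
    HasFDerivAt (gaussKer M η)
      ((-(η ^ 2)⁻¹ * gaussKer M η v) • innerSL ℝ v) v := by
  have h1 : HasFDerivAt (fun w : EuclideanSpace ℝ (Fin M) => ‖w‖ ^ 2)
      (2 • innerSL ℝ v) v := by
    simpa using (hasFDerivAt_id v).norm_sq
  have h2 : HasFDerivAt (fun w : EuclideanSpace ℝ (Fin M) => -‖w‖ ^ 2 / (2 * η ^ 2))
      ((-(2 * η ^ 2)⁻¹) • (2 • innerSL ℝ v)) v := by
    have h := (h1.const_mul (-(2 * η ^ 2)⁻¹ : ℝ))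
    have e1 : (fun w : EuclideanSpace ℝ (Fin M) => -(2 * η ^ 2)⁻¹ * ‖w‖ ^ 2)
        = fun w : EuclideanSpace ℝ (Fin M) => -‖w‖ ^ 2 / (2 * η ^ 2) := by
      funext w; field_simp
    rw [e1] at h
    exact h
  have h3 := h2.exp
  have h4 := h3.const_mul ((2 * Real.pi * η ^ 2) ^ (-(M : ℝ) / 2) : ℝ)
  refine h4.congr_fderiv ?_
  refine ContinuousLinearMap.ext fun w => ?_
  unfold gaussKer
  simp only [ContinuousLinearMap.coe_smul', Pi.smul_apply, smul_eq_mul]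
  have : (η:ℝ)^2 ≠ 0 := by positivity
  field_simp
  ring

end Aux

theorem tweedie_formula {M : ℕ} (η : ℝ) (hη : 0 < η)
    (p : EuclideanSpace ℝ (Fin M) → ℝ) (hpm : Measurable p)
    (hp0 : ∀ x, 0 ≤ p x) (hp1 : ∫ x, p x = 1)
    (hmean : Integrable fun x : EuclideanSpace ℝ (Fin M) => ‖x‖ * p x) :
    ∀ᵐ y : EuclideanSpace ℝ (Fin M),
      (∫ x, p x * gaussKer M η (y - x))⁻¹ • (∫ x, (p x * gaussKer M η (y - x)) • x)
        = y + η ^ 2 •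
            gradient (fun w => Real.log (∫ x, p x * gaussKer M η (w - x))) y := by
  refine Filter.Eventually.of_forall fun y => ?_
  set A : ℝ := (2 * Real.pi * η ^ 2) ^ (-(M : ℝ) / 2) with hAdef
  have hA : 0 < A := Real.rpow_pos_of_pos (by positivity) _
  have hη2 : (η:ℝ) ^ 2 ≠ 0 := by positivity
  -- p is integrable
  have hpInt : Integrable p := by
    by_contra h
    rw [integral_undef h] at hp1
    norm_num at hp1
  have hmeasG : ∀ z, Measurable fun x : EuclideanSpace ℝ (Fin M) => gaussKer M η (z - x) :=
    fun z => (gaussKer_continuous hη).measurable.comp (measurable_const.sub measurable_id)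
  have hc_meas : ∀ z, Measurable fun x => p x * gaussKer M η (z - x) :=
    fun z => hpm.mul (hmeasG z)
  -- integrability of x ↦ p x * G (z - x)
  have hq_int : ∀ z, Integrable fun x => p x * gaussKer M η (z - x) := by
    intro z
    refine (hpInt.const_mul A).mono' (hc_meas z).aestronglyMeasurable ?_
    refine Filter.Eventually.of_forall fun x => ?_
    rw [Real.norm_eq_abs, abs_of_nonneg (mul_nonneg (hp0 x) (gaussKer_pos hη _).le)]
    calc p x * gaussKer M η (z - x) ≤ p x * A := by
          gcongr
          · exact hp0 x
          · exact gaussKer_le hη _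
      _ = A * p x := mul_comm _ _
  -- positivity of the marginal density
  have hq_pos : ∀ z, 0 < ∫ x, p x * gaussKer M η (z - x) := by
    intro z
    have h1 : 0 < (volume : Measure (EuclideanSpace ℝ (Fin M))) (Function.support p) :=
      (integral_pos_iff_support_of_nonneg hp0 hpInt).mp (by rw [hp1]; norm_num)
    refine (integral_pos_iff_support_of_nonneg
      (fun x => mul_nonneg (hp0 x) (gaussKer_pos hη _).le) (hq_int z)).mpr ?_
    convert h1 using 2
    ext x
    simp [Function.mem_support, mul_eq_zero, (gaussKer_pos hη (z - x)).ne']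
  -- integrability of the first-moment integrand
  have hI_int : ∀ z, Integrable fun x => (p x * gaussKer M η (z - x)) • x := by
    intro z
    refine (hmean.const_mul A).mono'
      (((hc_meas z).aestronglyMeasurable).smul aestronglyMeasurable_id) ?_
    refine Filter.Eventually.of_forall fun x => ?_
    rw [norm_smul, Real.norm_eq_abs, abs_of_nonneg (mul_nonneg (hp0 x) (gaussKer_pos hη _).le)]
    calc p x * gaussKer M η (z - x) * ‖x‖ ≤ p x * A * ‖x‖ := by
          gcongr
          · exact hp0 x
          · exact gaussKer_le hη _
      _ = A * (‖x‖ * p x) := by ring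
  -- pointwise derivative in the parameter
  have hFderiv : ∀ (x z : EuclideanSpace ℝ (Fin M)),
      HasFDerivAt (fun w => p x * gaussKer M η (w - x))
        ((p x * (-(η ^ 2)⁻¹ * gaussKer M η (z - x))) • innerSL ℝ (z - x)) z := by
    intro x z
    have hsub : HasFDerivAt (fun w : EuclideanSpace ℝ (Fin M) => w - x)
        (ContinuousLinearMap.id ℝ _) z := (hasFDerivAt_id z).sub_const x
    have hg := (gaussKer_hasFDerivAt hη (z - x)).comp z hsub
    have h2 := hg.const_mul (p x)
    simpa [ContinuousLinearMap.comp_id, smul_smul] using h2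
  -- norm bound for the derivative
  have hbnd : ∀ (x z : EuclideanSpace ℝ (Fin M)),
      ‖(p x * (-(η ^ 2)⁻¹ * gaussKer M η (z - x))) • innerSL ℝ (z - x)‖
        ≤ (η ^ 2)⁻¹ * (A * (2 * η)) * p x := by
    intro x z
    have hGp := gaussKer_pos hη (z - x)
    rw [norm_smul (β := EuclideanSpace ℝ (Fin M) →L[ℝ] ℝ) _ (innerSL ℝ (z - x)),
      Real.norm_eq_abs, innerSL_apply_norm, abs_mul, abs_of_nonneg (hp0 x),
      abs_mul, abs_neg, abs_of_nonneg (inv_nonneg.2 (sq_nonneg η)), abs_of_nonneg hGp.le]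
    calc p x * ((η ^ 2)⁻¹ * gaussKer M η (z - x)) * ‖z - x‖
        = (p x * (η ^ 2)⁻¹) * (‖z - x‖ * gaussKer M η (z - x)) := by ring
      _ ≤ (p x * (η ^ 2)⁻¹) * (A * (2 * η)) :=
          mul_le_mul_of_nonneg_left (norm_mul_gaussKer_le hη _) (mul_nonneg (hp0 x) (by positivity))
      _ = (η ^ 2)⁻¹ * (A * (2 * η)) * p x := by ring
  -- strong measurability of the derivative family
  have hF'meas : ∀ z, AEStronglyMeasurable
      (fun x => (p x * (-(η ^ 2)⁻¹ * gaussKer M η (z - x))) • innerSL ℝ (z - x))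
      (volume : Measure (EuclideanSpace ℝ (Fin M))) := by
    intro z
    exact ((hpm.mul ((hmeasG z).const_mul _)).aestronglyMeasurable).smul
      (((innerSL ℝ).continuous.comp (continuous_const.sub continuous_id)).aestronglyMeasurable)
  have hF'int : ∀ z, Integrable
      (fun x => (p x * (-(η ^ 2)⁻¹ * gaussKer M η (z - x))) • innerSL ℝ (z - x)) := by
    intro z
    refine (hpInt.const_mul ((η ^ 2)⁻¹ * (A * (2 * η)))).mono' (hF'meas z) ?_
    exact Filter.Eventually.of_forall fun x => hbnd x z
  -- derivative of the marginal density under the integral sign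
  have hqderiv : HasFDerivAt (fun w => ∫ x, p x * gaussKer M η (w - x))
      (∫ x, (p x * (-(η ^ 2)⁻¹ * gaussKer M η (y - x))) • innerSL ℝ (y - x)) y := by
    refine hasFDerivAt_integral_of_dominated_of_fderiv_le (s := Metric.ball y 1) (Metric.ball_mem_nhds y one_pos)
      (Filter.Eventually.of_forall fun z => (hc_meas z).aestronglyMeasurable)
      (hq_int y) (hF'meas y)
      (Filter.Eventually.of_forall fun x => fun z _ => hbnd x z)
      (hpInt.const_mul _)
      (Filter.Eventually.of_forall fun x => fun z _ => hFderiv x z)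
  -- integrability of the gradient-vector integrand
  have hvec_int : ∀ z, Integrable
      (fun x => (p x * (-(η ^ 2)⁻¹ * gaussKer M η (z - x))) • (z - x)) := by
    intro z
    refine (hpInt.const_mul ((η ^ 2)⁻¹ * (A * (2 * η)))).mono'
      (((hpm.mul ((hmeasG z).const_mul _)).aestronglyMeasurable).smul
        ((continuous_const.sub continuous_id).aestronglyMeasurable)) ?_
    refine Filter.Eventually.of_forall fun x => ?_
    have h1 := hbnd x z
    rw [norm_smul (β := EuclideanSpace ℝ (Fin M) →L[ℝ] ℝ) _ (innerSL ℝ (z - x)),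
      innerSL_apply_norm] at h1
    rwa [norm_smul]
  -- the CLM-valued integral is the inner product with a vector integral
  have hswap : (∫ x, (p x * (-(η ^ 2)⁻¹ * gaussKer M η (y - x))) • innerSL ℝ (y - x))
      = innerSL ℝ (∫ x, (p x * (-(η ^ 2)⁻¹ * gaussKer M η (y - x))) • (y - x)) := by
    refine ContinuousLinearMap.ext fun h => ?_
    rw [ContinuousLinearMap.integral_apply (hF'int y)]
    simp only [ContinuousLinearMap.smul_apply, smul_eq_mul, innerSL_apply_apply]
    calc ∫ x, (p x * (-(η ^ 2)⁻¹ * gaussKer M η (y - x))) * ⟪y - x, h⟫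
        = ∫ x, ⟪h, (p x * (-(η ^ 2)⁻¹ * gaussKer M η (y - x))) • (y - x)⟫ := by
          congr 1
          funext x
          rw [real_inner_smul_right, real_inner_comm]
      _ = ⟪h, ∫ x, (p x * (-(η ^ 2)⁻¹ * gaussKer M η (y - x))) • (y - x)⟫ :=
          integral_inner (hvec_int y) h
      _ = _ := real_inner_comm _ _
  -- gradient of the log-density
  have hgradlog : HasGradientAt (fun w => Real.log (∫ x, p x * gaussKer M η (w - x)))
      ((∫ x, p x * gaussKer M η (y - x))⁻¹ •
        ∫ x, (p x * (-(η ^ 2)⁻¹ * gaussKer M η (y - x))) • (y - x)) y := by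
    have h1 := hqderiv.log (hq_pos y).ne'
    rw [hswap] at h1
    rw [hasGradientAt_iff_hasFDerivAt]
    refine h1.congr_fderiv ?_
    refine ContinuousLinearMap.ext fun h => ?_
    simp only [InnerProductSpace.toDual_apply_apply, real_inner_smul_left,
      ContinuousLinearMap.smul_apply, smul_eq_mul, innerSL_apply_apply]
  rw [hgradlog.gradient]
  -- split the vector integral
  have e2 : (fun x => (p x * (-(η ^ 2)⁻¹ * gaussKer M η (y - x))) • (y - x))
      = fun x => (-(η ^ 2)⁻¹ : ℝ) •
          ((p x * gaussKer M η (y - x)) • y - (p x * gaussKer M η (y - x)) • x) := by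
    funext x
    rw [← smul_sub, smul_smul]
    congr 1
    ring
  rw [e2, integral_smul, integral_sub ((hq_int y).smul_const y) (hI_int y), integral_smul_const]
  -- final algebra
  have hqne : (∫ x, p x * gaussKer M η (y - x)) ≠ 0 := (hq_pos y).ne'
  set q : ℝ := ∫ x, p x * gaussKer M η (y - x) with hqdef
  set I : EuclideanSpace ℝ (Fin M) := ∫ x, (p x * gaussKer M η (y - x)) • x with hIdef
  match_scalars <;> field_simp <;> ring
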